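/- Reduction to a quasi-linear parabolic system: let Ω ⊂ ℝ^d be open, let c_1,…,c_n : (0,∞)×Ω → ℝ and T : (0,∞)×Ω → ℝ be twice continuously differentiable with c_i ≥ 0 and 0 < c_min ≤ ∑_{i=1}^n c_i ≤ c_max on (0,∞)×Ω, let α ∈ ℝ, and let J_1,…,J_n : (0,∞)×Ω → ℝ^d be continuously differentiable. Suppose that on (0,∞)×Ω the mass balance equations ∂_t c_i + div_x J_i = 0 (i = 1,…,n), the flux–gradient relations ∇_x(c_i T) = −∑_{j≠i} k_{ij} (c_j J_i − c_i J_j) (i = 1,…,n), and the closure relation ∑_{i=1}^n J_i = −α ∇_x c_tot hold, where c_tot := ∑_{i=1}^n c_i. Then, with B := F_0^{−1} and c′ = (c_1,…,c_{n−1})^⊤, the vector c′ satisfies on (0,∞)×Ω the quasi-linear parabolic system ∂_t c′ − div_x(T B ∇_x c′) = div_x(B (c′ ⊗ ∇_x T)) + α div_x(B (c̃′ ⊗ ∇_x c_tot)), where ∇_x c′ is the (n−1)×d matrix with rows ∇_x c_i, (v ⊗ w)_{ij} = v_i w_j, and the divergence of an (n−1)×d matrix field is taken row by row. -/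

import Mathlib

/-- The reduced Maxwell–Stefan matrix `F₀` with entries
`[F₀] i j = -(k i j - k i n) * c i` for `i ≠ j` and
`[F₀] i i = ∑_{j ≠ i, j ≤ n-1} (k i j - k i n) * c j + c_tot * k i n`,
where `c_tot = ∑ r, c r`. The number of species is `m + 1` (the paper's `n`),
and the paper's index `n` is `Fin.last m`. -/
def MSmatF0 (m : ℕ) (k : Fin (m + 1) → Fin (m + 1) → ℝ)
    (c : Fin (m + 1) → ℝ) : Matrix (Fin m) (Fin m) ℝ :=
  Matrix.of fun i j =>
    if i = j then
      (∑ j' ∈ Finset.univ.erase i,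
          (k i.castSucc j'.castSucc - k i.castSucc (Fin.last m)) * c j'.castSucc)
        + (∑ r, c r) * k i.castSucc (Fin.last m)
    else -((k i.castSucc j.castSucc - k i.castSucc (Fin.last m)) * c i.castSucc)

/-- The vector `c̃′` with entries `(c̃′) i = k i n * c i`, `i = 1, …, n - 1`. -/
def MSctil (m : ℕ) (k : Fin (m + 1) → Fin (m + 1) → ℝ)
    (c : Fin (m + 1) → ℝ) : Fin m → ℝ :=
  fun i => k i.castSucc (Fin.last m) * c i.castSucc

/-- The `l`-th spatial partial derivative `∂f/∂x_l` of `f : ℝ^d → ℝ` at `x`. -/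
noncomputable def pderiv' (d : ℕ) (f : (Fin d → ℝ) → ℝ) (l : Fin d)
    (x : Fin d → ℝ) : ℝ :=
  fderiv ℝ f x (Pi.single l 1)

open Finset

lemma MS_row_id (m : ℕ) (k : Fin (m + 1) → Fin (m + 1) → ℝ) (C : Fin (m + 1) → ℝ)
    (w : Fin (m + 1) → ℝ) (i : Fin m) :
    (MSmatF0 m k C).mulVec (fun j => w j.castSucc) i
      = (∑ j ∈ Finset.univ.erase i.castSucc,
          k i.castSucc j * (C j * w i.castSucc - C i.castSucc * w j))
        + k i.castSucc (Fin.last m) * C i.castSucc * (∑ r, w r) := by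
  classical
  rw [Matrix.mulVec, dotProduct, ← Finset.add_sum_erase _ _ (Finset.mem_univ i)]
  rw [Finset.sum_congr rfl (fun j hj => by
    have hij : i ≠ j := fun h => (Finset.mem_erase.mp hj).1 h.symm
    show (MSmatF0 m k C) i j * w j.castSucc
        = -((k i.castSucc j.castSucc - k i.castSucc (Fin.last m)) * C i.castSucc) * w j.castSucc
    simp only [MSmatF0, Matrix.of_apply, if_neg hij])]
  show (MSmatF0 m k C) i i * w i.castSucc + _ = _
  simp only [MSmatF0, Matrix.of_apply, if_pos rfl]
  rw [Finset.sum_erase_eq_sub (Finset.mem_univ i),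
      Finset.sum_erase_eq_sub (Finset.mem_univ i),
      Finset.sum_erase_eq_sub (Finset.mem_univ i.castSucc),
      Fin.sum_univ_castSucc (f := fun r => C r),
      Fin.sum_univ_castSucc (f := fun r => w r),
      Fin.sum_univ_castSucc (f := fun j : Fin (m+1) =>
        k i.castSucc j * (C j * w i.castSucc - C i.castSucc * w j))]
  simp only [Finset.sum_mul, Finset.mul_sum, sub_mul, mul_sub, add_mul, mul_add,
    neg_mul, mul_neg, Finset.sum_add_distrib, Finset.sum_sub_distrib, Finset.sum_neg_distrib]
  ring_nf
  simp only [if_true, Finset.sum_mul, Finset.mul_sum, sub_mul, mul_sub, add_mul, mul_add,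
    neg_mul, mul_neg, Finset.sum_add_distrib, Finset.sum_sub_distrib, Finset.sum_neg_distrib]
  ring_nf

lemma ker_struct (n : ℕ) (k : Fin n → Fin n → ℝ)
    (hsymm : ∀ i j, k i j = k j i) (hkpos : ∀ i j, i ≠ j → 0 < k i j)
    (C z : Fin n → ℝ) (hC : ∀ i, 0 ≤ C i) (hpos : 0 < ∑ i, C i)
    (hz : ∀ i, ∑ j ∈ Finset.univ.erase i, k i j * (C j * z i - C i * z j) = 0) :
    ∀ i j, C j * z i = C i * z j := by
  classical
  obtain ⟨j0, hj0⟩ : ∃ j0, 0 < C j0 := by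
    by_contra h
    push_neg at h
    have : ∑ i, C i ≤ 0 := Finset.sum_nonpos fun i _ => h i
    linarith
  have hz0 : ∀ i, C i = 0 → z i = 0 := by
    intro i hCi
    have h1 : ∑ j ∈ Finset.univ.erase i, k i j * (C j * z i - C i * z j)
        = (∑ j ∈ Finset.univ.erase i, k i j * C j) * z i := by
      rw [Finset.sum_mul]
      exact Finset.sum_congr rfl fun j _ => by rw [hCi]; ring
    have h2 : (0:ℝ) < ∑ j ∈ Finset.univ.erase i, k i j * C j := by
      have hj0i : j0 ≠ i := by rintro rfl; rw [hCi] at hj0; exact lt_irrefl _ hj0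
      refine Finset.sum_pos' (fun j hj => ?_)
        ⟨j0, Finset.mem_erase.mpr ⟨hj0i, Finset.mem_univ _⟩, ?_⟩
      · exact mul_nonneg (hkpos i j (fun h => (Finset.mem_erase.mp hj).1 h.symm)).le (hC j)
      · exact mul_pos (hkpos i j0 (fun h => hj0i h.symm)) hj0
    have h3 := hz i
    rw [h1] at h3
    exact (mul_eq_zero.mp h3).resolve_left (ne_of_gt h2)
  set d : Fin n → ℝ := fun i => if C i = 0 then 0 else (C i)⁻¹ with hd
  set a : Fin n → Fin n → ℝ := fun i j =>
    if i = j then 0 else (d i * z i) * (k i j * (C j * z i - C i * z j)) with ha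
  have hrow : ∀ i, ∑ j, a i j = 0 := by
    intro i
    have hdiag : a i i = 0 := by simp [ha]
    rw [← Finset.sum_erase Finset.univ hdiag]
    rw [show ∑ j ∈ Finset.univ.erase i, a i j
        = ∑ j ∈ Finset.univ.erase i, (d i * z i) * (k i j * (C j * z i - C i * z j)) from
      Finset.sum_congr rfl fun j hj => by
        simp only [ha]; rw [if_neg (fun h => (Finset.mem_erase.mp hj).1 h.symm)]]
    rw [← Finset.mul_sum, hz i, mul_zero]
  have key : ∀ i j, 0 ≤ a i j + a j i ∧ (a i j + a j i = 0 → C j * z i = C i * z j) := by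
    intro i j
    rcases eq_or_ne i j with rfl | hij
    · simp [ha]
    rcases (hC i).eq_or_lt' with hCi | hCi
    · have hCi' : C i = 0 := hCi
      have hzi := hz0 i hCi'
      have hΔ : C j * z i - C i * z j = 0 := by rw [hzi, hCi']; ring
      have hΔ' : C i * z j - C j * z i = 0 := by linarith
      have hzero : a i j + a j i = 0 := by
        simp only [ha, if_neg hij, if_neg (Ne.symm hij), hΔ, hΔ', mul_zero, add_zero]
      exact ⟨le_of_eq hzero.symm, fun _ => by linarith⟩
    rcases (hC j).eq_or_lt' with hCj | hCj
    · have hCj' : C j = 0 := hCj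
      have hzj := hz0 j hCj'
      have hΔ : C j * z i - C i * z j = 0 := by rw [hzj, hCj']; ring
      have hΔ' : C i * z j - C j * z i = 0 := by linarith
      have hzero : a i j + a j i = 0 := by
        simp only [ha, if_neg hij, if_neg (Ne.symm hij), hΔ, hΔ', mul_zero, add_zero]
      exact ⟨le_of_eq hzero.symm, fun _ => by linarith⟩
    · have hdi : d i = (C i)⁻¹ := by simp [hd, ne_of_gt hCi]
      have hdj : d j = (C j)⁻¹ := by simp [hd, ne_of_gt hCj]
      have hform : a i j + a j i
          = k i j * (C j * z i - C i * z j)^2 / (C i * C j) := by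
        simp only [ha, if_neg hij, if_neg (Ne.symm hij), hdi, hdj, hsymm j i]
        field_simp
        ring
      constructor
      · rw [hform]
        exact div_nonneg (mul_nonneg (hkpos i j hij).le (sq_nonneg _)) (mul_pos hCi hCj).le
      · intro h0
        rw [hform] at h0
        rcases div_eq_zero_iff.mp h0 with h | h
        · rcases mul_eq_zero.mp h with h | h
          · exact absurd h (ne_of_gt (hkpos i j hij))
          · have := pow_eq_zero_iff (two_ne_zero) |>.mp h
            linarith
        · exact absurd h (ne_of_gt (mul_pos hCi hCj))
  have htot : ∑ i, ∑ j, (a i j + a j i) = 0 := by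
    simp only [Finset.sum_add_distrib]
    rw [Finset.sum_comm (f := fun i j => a j i)]
    simp [hrow]
  have hzero : ∀ i j, a i j + a j i = 0 := by
    have h1 := (Finset.sum_eq_zero_iff_of_nonneg
      (fun i _ => Finset.sum_nonneg fun j _ => (key i j).1)).mp htot
    intro i j
    exact (Finset.sum_eq_zero_iff_of_nonneg
      (fun j _ => (key i j).1)).mp (h1 i (Finset.mem_univ i)) j (Finset.mem_univ j)
  exact fun i j => (key i j).2 (hzero i j)


lemma MS_det_ne_zero (m : ℕ) (k : Fin (m+1) → Fin (m+1) → ℝ)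
    (hsymm : ∀ i j, k i j = k j i) (hkpos : ∀ i j, i ≠ j → 0 < k i j)
    (C : Fin (m+1) → ℝ) (hC : ∀ i, 0 ≤ C i) (hpos : 0 < ∑ i, C i) :
    (MSmatF0 m k C).det ≠ 0 := by
  classical
  intro hdet
  obtain ⟨v, hv, hmv⟩ := (Matrix.exists_mulVec_eq_zero_iff).mpr hdet
  set z : Fin (m+1) → ℝ := Fin.snoc v (-∑ j, v j) with hzdef
  have hzc : ∀ j : Fin m, z j.castSucc = v j := fun j => by
    simp [hzdef, Fin.snoc_castSucc]
  have hzl : z (Fin.last m) = -∑ j, v j := by simp [hzdef, Fin.snoc_last]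
  have hsum : ∑ r, z r = 0 := by
    rw [Fin.sum_univ_castSucc]
    simp only [hzl]
    rw [Finset.sum_congr rfl fun j _ => hzc j]
    ring
  have hrowm : ∀ i : Fin m, ∑ j ∈ Finset.univ.erase i.castSucc,
      k i.castSucc j * (C j * z i.castSucc - C i.castSucc * z j) = 0 := by
    intro i
    have h := MS_row_id m k C z i
    rw [show (fun j => z j.castSucc) = v from funext hzc, hmv] at h
    simp only [Pi.zero_apply, hsum, mul_zero, add_zero] at h
    exact h.symm
  have hF : ∀ i : Fin (m+1), ∑ j ∈ Finset.univ.erase i,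
        k i j * (C j * z i - C i * z j)
      = ∑ j, k i j * (C j * z i - C i * z j) :=
    fun i => Finset.sum_erase _ (by ring)
  have htot : ∑ i, ∑ j, k i j * (C j * z i - C i * z j) = 0 := by
    have h2 : (∑ i, ∑ j, k i j * (C j * z i - C i * z j))
        + (∑ i, ∑ j, k i j * (C j * z i - C i * z j)) = 0 := by
      nth_rewrite 2 [Finset.sum_comm]
      rw [← Finset.sum_add_distrib]
      refine Finset.sum_eq_zero fun i _ => ?_
      rw [← Finset.sum_add_distrib]
      refine Finset.sum_eq_zero fun j _ => ?_
      rw [hsymm j i]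
      ring
    linarith
  have hfull : ∀ i : Fin (m+1), ∑ j ∈ Finset.univ.erase i,
      k i j * (C j * z i - C i * z j) = 0 := by
    intro i
    induction i using Fin.lastCases with
    | last =>
      rw [hF]
      rw [Fin.sum_univ_castSucc
        (f := fun i => ∑ j, k i j * (C j * z i - C i * z j))] at htot
      have : ∀ i : Fin m, ∑ j, k i.castSucc j * (C j * z i.castSucc - C i.castSucc * z j) = 0 :=
        fun i => (hF i.castSucc).symm.trans (hrowm i)
      rw [Finset.sum_congr rfl fun i _ => this i] at htot
      simpa using htot
    | cast i => exact hrowm i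
  have hker := ker_struct (m+1) k hsymm hkpos C z hC hpos hfull
  have hzall : ∀ i, z i = 0 := by
    intro i
    have h : (∑ j, C j) * z i = C i * ∑ j, z j := by
      rw [Finset.sum_mul, Finset.mul_sum]
      exact Finset.sum_congr rfl fun j _ => hker i j
    rw [hsum, mul_zero] at h
    exact (mul_eq_zero.mp h).resolve_left (ne_of_gt hpos)
  exact hv (funext fun j => by rw [← hzc j]; rw [hzall]; rfl)

lemma slice_contDiffAt {d : ℕ} {Ω : Set (Fin d → ℝ)} (hΩ : IsOpen Ω)
    {f : ℝ × (Fin d → ℝ) → ℝ} {N : ℕ∞} (hf : ContDiffOn ℝ N f (Set.Ioi 0 ×ˢ Ω))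
    {t : ℝ} (ht : 0 < t) {y : Fin d → ℝ} (hy : y ∈ Ω) :
    ContDiffAt ℝ N (fun z => f (t, z)) y := by
  have hopen : IsOpen (Set.Ioi (0:ℝ) ×ˢ Ω) := isOpen_Ioi.prod hΩ
  have h1 : ContDiffAt ℝ N f (t, y) :=
    hf.contDiffAt (hopen.mem_nhds ⟨ht, hy⟩)
  exact h1.comp y ((contDiffAt_const (c := t)).prodMk contDiffAt_id)

lemma pderiv_diffAt {d : ℕ} {g : (Fin d → ℝ) → ℝ} {y : Fin d → ℝ}
    (hg : ContDiffAt ℝ 2 g y) (l : Fin d) :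
    DifferentiableAt ℝ (fun z => pderiv' d g l z) y := by
  have h1 : ContDiffAt ℝ 1 (fderiv ℝ g) y := hg.fderiv_right (by norm_num)
  have h2 : DifferentiableAt ℝ (fderiv ℝ g) y := h1.differentiableAt one_ne_zero
  exact h2.clm_apply (differentiableAt_const _)

lemma diffAt_finset_prod {X : Type*} [NormedAddCommGroup X] [NormedSpace ℝ X]
    {ι : Type*} [DecidableEq ι] {u : Finset ι} {g : ι → X → ℝ} {y : X}
    (h : ∀ i ∈ u, DifferentiableAt ℝ (g i) y) :
    DifferentiableAt ℝ (fun z => ∏ i ∈ u, g i z) y := by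
  classical
  induction u using Finset.induction with
  | empty => simp
  | @insert a s hni ih =>
    simp only [Finset.prod_insert hni]
    exact (h a (Finset.mem_insert_self a s)).mul
      (ih fun i hi => h i (Finset.mem_insert_of_mem hi))

lemma diffAt_det {X : Type*} [NormedAddCommGroup X] [NormedSpace ℝ X]
    {q : ℕ} {f : X → Matrix (Fin q) (Fin q) ℝ} {y : X}
    (h : ∀ i j, DifferentiableAt ℝ (fun z => f z i j) y) :
    DifferentiableAt ℝ (fun z => (f z).det) y := by
  classical
  simp only [Matrix.det_apply']
  apply DifferentiableAt.fun_sum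
  intro σ _
  exact (diffAt_finset_prod fun i _ => h (σ i) i).const_mul _

lemma diffAt_inv_entry {X : Type*} [NormedAddCommGroup X] [NormedSpace ℝ X]
    {q : ℕ} {f : X → Matrix (Fin q) (Fin q) ℝ} {y : X}
    (h : ∀ i j, DifferentiableAt ℝ (fun z => f z i j) y)
    (hdet : (f y).det ≠ 0) (i j : Fin q) :
    DifferentiableAt ℝ (fun z => (f z)⁻¹ i j) y := by
  classical
  have heq : (fun z => (f z)⁻¹ i j)
      = fun z => ((f z).det)⁻¹ * ((f z).adjugate i j) := by
    funext z
    rw [Matrix.inv_def, Matrix.smul_apply, Ring.inverse_eq_inv, smul_eq_mul]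
  rw [heq]
  have hadj : DifferentiableAt ℝ (fun z => (f z).adjugate i j) y := by
    have he2 : (fun z => (f z).adjugate i j)
        = fun z => ((f z).updateRow j (Pi.single i 1)).det := by
      funext z; rw [Matrix.adjugate_apply]
    rw [he2]
    apply diffAt_det
    intro a b
    simp only [Matrix.updateRow_apply]
    by_cases hab : a = j
    · simp [hab]
    · simp only [if_neg hab]; exact h a b
  exact ((diffAt_det h).inv hdet).mul hadj


/-- reduction to a quasi-linear parabolic system: if on
`(0, ∞) × Ω` the mass balance equations `∂ₜcᵢ + div Jᵢ = 0`, the flux–gradient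
relations `∇ₓ(cᵢ T) = -∑_{j ≠ i} k i j (cⱼ Jᵢ - cᵢ Jⱼ)`, and the closure relation
`∑ i, Jᵢ = -α ∇ₓ c_tot` hold, then, with `B = F₀⁻¹`, the vector
`c′ = (c₁, …, c_{n-1})` satisfies on `(0, ∞) × Ω` the quasi-linear parabolic
system `∂ₜc′ - div(T B ∇ₓc′) = div(B (c′ ⊗ ∇ₓT)) + α div(B (c̃′ ⊗ ∇ₓ c_tot))`,
the divergence of a matrix field being taken row by row. -/
theorem reduction_to_quasilinear_parabolic_system
    (m : ℕ) (hm : 1 ≤ m)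
    (k : Fin (m + 1) → Fin (m + 1) → ℝ)
    (hsymm : ∀ i j, k i j = k j i)
    (hkpos : ∀ i j, i ≠ j → 0 < k i j)
    (d : ℕ) (hd : 1 ≤ d)
    (Ω : Set (Fin d → ℝ)) (hΩ : IsOpen Ω)
    (c : Fin (m + 1) → ℝ → (Fin d → ℝ) → ℝ)
    (T : ℝ → (Fin d → ℝ) → ℝ)
    (α : ℝ)
    (J : Fin (m + 1) → ℝ → (Fin d → ℝ) → (Fin d → ℝ))
    (cmin cmax : ℝ) (hcmin : 0 < cmin)
    (hcreg : ∀ i, ContDiffOn ℝ 2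
      (fun p : ℝ × (Fin d → ℝ) => c i p.1 p.2) (Set.Ioi 0 ×ˢ Ω))
    (hTreg : ContDiffOn ℝ 2
      (fun p : ℝ × (Fin d → ℝ) => T p.1 p.2) (Set.Ioi 0 ×ˢ Ω))
    (hJreg : ∀ i, ContDiffOn ℝ 1
      (fun p : ℝ × (Fin d → ℝ) => J i p.1 p.2) (Set.Ioi 0 ×ˢ Ω))
    (hcnn : ∀ i, ∀ t > (0 : ℝ), ∀ y ∈ Ω, 0 ≤ c i t y)
    (hlb : ∀ t > (0 : ℝ), ∀ y ∈ Ω, cmin ≤ ∑ i, c i t y)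
    (hub : ∀ t > (0 : ℝ), ∀ y ∈ Ω, ∑ i, c i t y ≤ cmax)
    (hmass : ∀ t > (0 : ℝ), ∀ x ∈ Ω, ∀ i : Fin (m + 1),
      deriv (fun s => c i s x) t
        + ∑ l : Fin d, pderiv' d (fun y => J i t y l) l x = 0)
    (hflux : ∀ t > (0 : ℝ), ∀ x ∈ Ω, ∀ i : Fin (m + 1), ∀ l : Fin d,
      pderiv' d (fun y => c i t y * T t y) l x
        = -∑ j ∈ Finset.univ.erase i,
            k i j * (c j t x * J i t x l - c i t x * J j t x l))
    (hclos : ∀ t > (0 : ℝ), ∀ x ∈ Ω, ∀ l : Fin d,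
      ∑ i, J i t x l
        = -(α * pderiv' d (fun y => ∑ r, c r t y) l x)) :
    ∀ t > (0 : ℝ), ∀ x ∈ Ω, ∀ i : Fin m,
      deriv (fun s => c i.castSucc s x) t
        - ∑ l : Fin d, pderiv' d
            (fun y => T t y * ∑ j : Fin m,
              ((MSmatF0 m k (fun r => c r t y))⁻¹) i j
                * pderiv' d (fun z => c j.castSucc t z) l y) l x
      = ∑ l : Fin d, pderiv' d
            (fun y => ∑ j : Fin m,
              ((MSmatF0 m k (fun r => c r t y))⁻¹) i j
                * (c j.castSucc t y * pderiv' d (T t) l y)) l x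
        + α * ∑ l : Fin d, pderiv' d
            (fun y => ∑ j : Fin m,
              ((MSmatF0 m k (fun r => c r t y))⁻¹) i j
                * (MSctil m k (fun r => c r t y) j
                    * pderiv' d (fun z => ∑ r, c r t z) l y)) l x := by
  intro t ht x hx i
  classical
  -- THE POINTWISE KEY IDENTITY
  have hkey : ∀ (l : Fin d) (y : Fin d → ℝ), y ∈ Ω →
      (T t y * ∑ j : Fin m, ((MSmatF0 m k (fun r => c r t y))⁻¹) i j
          * pderiv' d (fun z => c j.castSucc t z) l y)
        + ((∑ j : Fin m, ((MSmatF0 m k (fun r => c r t y))⁻¹) i j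
            * (c j.castSucc t y * pderiv' d (T t) l y))
          + α * ∑ j : Fin m, ((MSmatF0 m k (fun r => c r t y))⁻¹) i j
            * (MSctil m k (fun r => c r t y) j
                * pderiv' d (fun z => ∑ r, c r t z) l y))
      = -(J i.castSucc t y l) := by
    intro l y hy
    have hcd2 : ∀ r : Fin (m+1), ContDiffAt ℝ 2 (fun z => c r t z) y :=
      fun r => slice_contDiffAt hΩ (hcreg r) ht hy
    have hTd2 : ContDiffAt ℝ 2 (T t) y := slice_contDiffAt hΩ hTreg ht hy
    have hprod : ∀ r : Fin (m+1), pderiv' d (fun z => c r t z * T t z) l y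
        = T t y * pderiv' d (fun z => c r t z) l y
          + c r t y * pderiv' d (T t) l y := by
      intro r
      simp only [pderiv']
      rw [fderiv_fun_mul ((hcd2 r).differentiableAt two_ne_zero)
        (hTd2.differentiableAt two_ne_zero)]
      simp only [ContinuousLinearMap.add_apply, ContinuousLinearMap.smul_apply,
        smul_eq_mul]
      ring
    have hmvrow : ∀ i0 : Fin m,
        (MSmatF0 m k (fun r => c r t y)).mulVec (fun j => J j.castSucc t y l) i0
        = -(T t y * pderiv' d (fun z => c i0.castSucc t z) l y
            + c i0.castSucc t y * pderiv' d (T t) l y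
            + α * (k i0.castSucc (Fin.last m) * c i0.castSucc t y)
                * pderiv' d (fun z => ∑ r, c r t z) l y) := by
      intro i0
      rw [show (MSmatF0 m k (fun r => c r t y)).mulVec (fun j => J j.castSucc t y l) i0
          = (∑ j ∈ Finset.univ.erase i0.castSucc,
              k i0.castSucc j * ((fun r => c r t y) j * J i0.castSucc t y l
                - (fun r => c r t y) i0.castSucc * J j t y l))
            + k i0.castSucc (Fin.last m) * (fun r => c r t y) i0.castSucc
                * (∑ r, J r t y l)
          from MS_row_id m k (fun r => c r t y) (fun r => J r t y l) i0]
      simp only []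
      have h1 := hflux t ht y hy i0.castSucc l
      rw [hprod i0.castSucc] at h1
      have h2 := hclos t ht y hy l
      rw [h2]
      rw [show (∑ j ∈ Finset.univ.erase i0.castSucc,
            k i0.castSucc j * (c j t y * J i0.castSucc t y l
              - c i0.castSucc t y * J j t y l))
          = -(T t y * pderiv' d (fun z => c i0.castSucc t z) l y
              + c i0.castSucc t y * pderiv' d (T t) l y) from by linarith [h1]]
      ring
    set Nm := MSmatF0 m k (fun r => c r t y) with hNm
    have hdet : Nm.det ≠ 0 :=
      MS_det_ne_zero m k hsymm hkpos _ (fun r => hcnn r t ht y hy)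
        (lt_of_lt_of_le hcmin (hlb t ht y hy))
    have hsolve : (fun j => J j.castSucc t y l)
        = Nm⁻¹.mulVec (Nm.mulVec (fun j => J j.castSucc t y l)) := by
      rw [Matrix.mulVec_mulVec, Matrix.nonsing_inv_mul _ (isUnit_iff_ne_zero.mpr hdet),
        Matrix.one_mulVec]
    have hJv : J i.castSucc t y l
        = ∑ j : Fin m, Nm⁻¹ i j * (Nm.mulVec (fun j => J j.castSucc t y l)) j := by
      have h3 := congrFun hsolve i
      simp only [Matrix.mulVec, dotProduct] at h3 ⊢
      exact h3
    simp only [hmvrow] at hJv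
    rw [hJv, ← Finset.sum_neg_distrib]
    rw [Finset.mul_sum, Finset.mul_sum, ← Finset.sum_add_distrib, ← Finset.sum_add_distrib]
    refine Finset.sum_congr rfl fun j _ => ?_
    simp only [MSctil]
    ring
  -- DIFFERENTIABILITY AT x
  have hcdx : ∀ r : Fin (m+1), ContDiffAt ℝ 2 (fun z => c r t z) x :=
    fun r => slice_contDiffAt hΩ (hcreg r) ht hx
  have hTdx : ContDiffAt ℝ 2 (T t) x := slice_contDiffAt hΩ hTreg ht hx
  have hentry : ∀ a b : Fin m,
      DifferentiableAt ℝ (fun z => MSmatF0 m k (fun r => c r t z) a b) x := by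
    intro a b
    by_cases hab : a = b
    · subst hab
      simp only [MSmatF0, Matrix.of_apply, if_pos rfl]
      refine DifferentiableAt.add ?_ ?_
      · exact DifferentiableAt.fun_sum fun j _ =>
          ((hcdx j.castSucc).differentiableAt two_ne_zero).const_mul _
      · exact (DifferentiableAt.fun_sum fun r _ =>
          (hcdx r).differentiableAt two_ne_zero).mul_const _
    · simp only [MSmatF0, Matrix.of_apply, if_neg hab]
      exact (((hcdx a.castSucc).differentiableAt two_ne_zero).const_mul _).neg
  have hdetx : (MSmatF0 m k (fun r => c r t x)).det ≠ 0 :=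
    MS_det_ne_zero m k hsymm hkpos _ (fun r => hcnn r t ht x hx)
      (lt_of_lt_of_le hcmin (hlb t ht x hx))
  have hBx : ∀ a b : Fin m,
      DifferentiableAt ℝ (fun z => (MSmatF0 m k (fun r => c r t z))⁻¹ a b) x :=
    fun a b => diffAt_inv_entry hentry hdetx a b
  have hctotx : ContDiffAt ℝ 2 (fun z => ∑ r, c r t z) x :=
    ContDiffAt.sum fun r _ => hcdx r
  have hA : ∀ l : Fin d, DifferentiableAt ℝ
      (fun y => T t y * ∑ j : Fin m, ((MSmatF0 m k (fun r => c r t y))⁻¹) i j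
        * pderiv' d (fun z => c j.castSucc t z) l y) x :=
    fun l => (hTdx.differentiableAt two_ne_zero).mul <|
      DifferentiableAt.fun_sum fun j _ => (hBx i j).mul (pderiv_diffAt (hcdx j.castSucc) l)
  have hB' : ∀ l : Fin d, DifferentiableAt ℝ
      (fun y => ∑ j : Fin m, ((MSmatF0 m k (fun r => c r t y))⁻¹) i j
        * (c j.castSucc t y * pderiv' d (T t) l y)) x :=
    fun l => DifferentiableAt.fun_sum fun j _ => (hBx i j).mul
      (((hcdx j.castSucc).differentiableAt two_ne_zero).mul (pderiv_diffAt hTdx l))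
  have hC' : ∀ l : Fin d, DifferentiableAt ℝ
      (fun y => ∑ j : Fin m, ((MSmatF0 m k (fun r => c r t y))⁻¹) i j
        * (MSctil m k (fun r => c r t y) j
            * pderiv' d (fun z => ∑ r, c r t z) l y)) x := by
    intro l
    refine DifferentiableAt.fun_sum fun j _ => (hBx i j).mul (DifferentiableAt.mul ?_
      (pderiv_diffAt hctotx l))
    exact ((hcdx j.castSucc).differentiableAt two_ne_zero).const_mul _
  -- PER-COORDINATE DERIVATIVE IDENTITY AT x
  have hpt : ∀ l : Fin d,
      pderiv' d (fun y => T t y * ∑ j : Fin m,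
          ((MSmatF0 m k (fun r => c r t y))⁻¹) i j
            * pderiv' d (fun z => c j.castSucc t z) l y) l x
        + (pderiv' d (fun y => ∑ j : Fin m,
            ((MSmatF0 m k (fun r => c r t y))⁻¹) i j
              * (c j.castSucc t y * pderiv' d (T t) l y)) l x
          + α * pderiv' d (fun y => ∑ j : Fin m,
            ((MSmatF0 m k (fun r => c r t y))⁻¹) i j
              * (MSctil m k (fun r => c r t y) j
                  * pderiv' d (fun z => ∑ r, c r t z) l y)) l x)
      = -pderiv' d (fun y => J i.castSucc t y l) l x := by
    intro l
    have heq : (fun y => (T t y * ∑ j : Fin m,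
          ((MSmatF0 m k (fun r => c r t y))⁻¹) i j
            * pderiv' d (fun z => c j.castSucc t z) l y)
        + ((∑ j : Fin m, ((MSmatF0 m k (fun r => c r t y))⁻¹) i j
            * (c j.castSucc t y * pderiv' d (T t) l y))
          + α * ∑ j : Fin m, ((MSmatF0 m k (fun r => c r t y))⁻¹) i j
            * (MSctil m k (fun r => c r t y) j
                * pderiv' d (fun z => ∑ r, c r t z) l y)))
        =ᶠ[nhds x] (fun y => -(J i.castSucc t y l)) := by
      filter_upwards [hΩ.mem_nhds hx] with y hy
      exact hkey l y hy
    have hfd := Filter.EventuallyEq.fderiv_eq (𝕜 := ℝ) heq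
    rw [fderiv_fun_add (hA l) ((hB' l).fun_add ((hC' l).const_mul α)),
      fderiv_fun_add (hB' l) ((hC' l).const_mul α),
      fderiv_const_mul (hC' l) α, fderiv_fun_neg] at hfd
    have h2 := congrArg (fun (L : (Fin d → ℝ) →L[ℝ] ℝ) => L (Pi.single l 1)) hfd
    simpa only [ContinuousLinearMap.add_apply, ContinuousLinearMap.smul_apply,
      smul_eq_mul, ContinuousLinearMap.neg_apply, pderiv'] using h2
  -- FINAL ASSEMBLY
  have hm' := hmass t ht x hx i.castSucc
  have hsubst : (∑ l : Fin d, pderiv' d (fun y => T t y * ∑ j : Fin m,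
        ((MSmatF0 m k (fun r => c r t y))⁻¹) i j
          * pderiv' d (fun z => c j.castSucc t z) l y) l x)
      = ∑ l : Fin d, (-(pderiv' d (fun y => J i.castSucc t y l) l x)
          - pderiv' d (fun y => ∑ j : Fin m,
              ((MSmatF0 m k (fun r => c r t y))⁻¹) i j
                * (c j.castSucc t y * pderiv' d (T t) l y)) l x
          - α * pderiv' d (fun y => ∑ j : Fin m,
              ((MSmatF0 m k (fun r => c r t y))⁻¹) i j
                * (MSctil m k (fun r => c r t y) j
                    * pderiv' d (fun z => ∑ r, c r t z) l y)) l x) :=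
    Finset.sum_congr rfl fun l _ => by linarith [hpt l]
  rw [hsubst]
  simp only [Finset.sum_sub_distrib, Finset.sum_neg_distrib]
  rw [← Finset.mul_sum]
  linarith [hm']
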